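/- Let c : G → M be a surjective cellular cover of an infinite group M with central kernel K. If K is weakly-(|M|, β)-separable for some cardinal β ≥ |M|, and Hom(G, K) = 0, then |G| ≤ β. -/

import Mathlib

open scoped Pointwise


universe u

open Cardinal in
private lemma myClosureCard {G : Type u} [Group G] (T : Set G) (κ : Cardinal.{u})
    (hκ : Cardinal.aleph0 ≤ κ) (hT : Cardinal.mk T ≤ κ) :
    Cardinal.mk (Subgroup.closure T) ≤ κ := by
  classical
  -- surjection from lists
  let f : List (T ⊕ T) → G := fun l =>
    (l.map (fun x => Sum.elim (fun t : T => (t : G)) (fun t : T => (t : G)⁻¹) x)).prod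
  let R : Subgroup G :=
    { carrier := Set.range f
      one_mem' := ⟨[], rfl⟩
      mul_mem' := by
        rintro _ _ ⟨l₁, rfl⟩ ⟨l₂, rfl⟩
        exact ⟨l₁ ++ l₂, by simp [f]⟩
      inv_mem' := by
        rintro _ ⟨l, rfl⟩
        refine ⟨(l.map (Sum.elim Sum.inr Sum.inl)).reverse, ?_⟩
        show (List.map _ ((l.map (Sum.elim Sum.inr Sum.inl)).reverse)).prod = _
        rw [List.map_reverse, List.map_map, List.prod_inv_reverse, List.map_map]
        congr 2
        apply List.map_congr_left
        rintro (t | t) _ <;> simp }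
  have hTR : T ⊆ R := fun t ht => ⟨[Sum.inl ⟨t, ht⟩], by simp [f]⟩
  have hclR : Subgroup.closure T ≤ R := Subgroup.closure_le R |>.mpr hTR
  have h1 : Cardinal.mk (Subgroup.closure T) ≤ Cardinal.mk R :=
    Cardinal.mk_le_mk_of_subset hclR
  have h2 : Cardinal.mk R ≤ Cardinal.mk (List (T ⊕ T)) := by
    have : (R : Set G) = Set.range f := rfl
    rw [show Cardinal.mk R = Cardinal.mk (Set.range f) from rfl]
    exact Cardinal.mk_range_le
  refine h1.trans (h2.trans ?_)
  calc Cardinal.mk (List (T ⊕ T)) ≤ max ℵ₀ (Cardinal.mk (T ⊕ T)) := Cardinal.mk_list_le_max _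
    _ ≤ κ := by
      apply max_le hκ
      have hsum : Cardinal.mk (T ⊕ T) = Cardinal.mk T + Cardinal.mk T := by
        simpa using Cardinal.mk_sum (α := T) (β := T)
      rw [hsum]
      calc Cardinal.mk T + Cardinal.mk T ≤ κ + κ := add_le_add hT hT
        _ = κ := Cardinal.add_eq_self hκ

/-- Let `c : G → M` be a surjective cellular cover of an infinite group `M` with
central kernel `K`. If `K` is weakly-(|M|, β)-separable for some `β ≥ |M|`, and
`Hom(G, K) = 0`, then `|G| ≤ β`. -/
theorem cellular_cover_weakly_separable_kernel_card_le
    {G M : Type u} [Group G] [Group M] (c : G →* M)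
    (hsurj : Function.Surjective c)
    (hM : Infinite M)
    (hcell : ∀ φ : G →* M, ∃! ψ : G →* G, c.comp ψ = φ)
    (hcentral : c.ker ≤ Subgroup.center G)
    (β : Cardinal.{u}) (hβ : Cardinal.mk M ≤ β)
    -- `K = ker c` is weakly-(|M|, β)-separable: every subgroup of `K` of size ≤ |M|
    -- is contained in a direct summand of `K` of size ≤ β
    (hsep : ∀ K₁ : Subgroup G, K₁ ≤ c.ker → Cardinal.mk K₁ ≤ Cardinal.mk M →
      ∃ K₂ F : Subgroup G, K₁ ≤ K₂ ∧ K₂ ≤ c.ker ∧ F ≤ c.ker ∧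
        Cardinal.mk K₂ ≤ β ∧ K₂ ⊓ F = ⊥ ∧ K₂ ⊔ F = c.ker)
    -- Hom(G, K) = 0
    (hhom : ∀ f : G →* G, (∀ g : G, f g ∈ c.ker) → f = 1) :
    Cardinal.mk G ≤ β := by
  classical
  -- a section of `c`
  obtain ⟨s, hs⟩ : ∃ s : M → G, ∀ m, c (s m) = m :=
    ⟨Function.surjInv hsurj, fun m => Function.surjInv_eq hsurj m⟩
  -- the factor set
  set w : M × M → G := fun p => s p.1 * s p.2 * (s (p.1 * p.2))⁻¹ with hw
  set T : Set G := Set.range w with hT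
  have hTker : ∀ p : M × M, w p ∈ c.ker := by
    intro p
    rw [MonoidHom.mem_ker]
    simp only [w, map_mul, map_inv, hs]
    group
  have hK₁le : Subgroup.closure T ≤ c.ker := by
    rw [Subgroup.closure_le]
    rintro _ ⟨p, rfl⟩
    exact hTker p
  have hMinf : Cardinal.aleph0 ≤ Cardinal.mk M := Cardinal.infinite_iff.mp hM
  have hK₁card : Cardinal.mk (Subgroup.closure T) ≤ Cardinal.mk M := by
    apply myClosureCard T _ hMinf
    calc Cardinal.mk T ≤ Cardinal.mk (M × M) := Cardinal.mk_range_le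
      _ = Cardinal.mk M := by
        have : Cardinal.mk (M × M) = Cardinal.mk M * Cardinal.mk M := by
          simpa using Cardinal.mk_prod (α := M) (β := M)
        rw [this, Cardinal.mul_eq_self hMinf]
  obtain ⟨K₂, F, hK₁K₂, hK₂ker, hFker, hK₂card, hKFinf, hKFsup⟩ :=
    hsep _ hK₁le hK₁card
  -- basic facts
  have hwK₂ : ∀ m m' : M, s m * s m' * (s (m * m'))⁻¹ ∈ K₂ := fun m m' =>
    hK₁K₂ (Subgroup.subset_closure ⟨(m, m'), rfl⟩)
  have hs1 : s 1 ∈ K₂ := by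
    have := hwK₂ 1 1
    simpa using this
  have hcomm : ∀ x ∈ c.ker, ∀ g : G, x * g = g * x := fun x hx g =>
    (Subgroup.mem_center_iff.mp (hcentral hx) g).symm
  -- the complement subgroup S
  set S : Subgroup G :=
    { carrier := {g : G | ∃ k ∈ K₂, ∃ m : M, g = k * s m}
      one_mem' := ⟨(s 1)⁻¹, K₂.inv_mem hs1, 1, by simp⟩
      mul_mem' := by
        rintro _ _ ⟨k, hk, m, rfl⟩ ⟨k', hk', m', rfl⟩
        refine ⟨k * k' * (s m * s m' * (s (m * m'))⁻¹),
          K₂.mul_mem (K₂.mul_mem hk hk') (hwK₂ m m'), m * m', ?_⟩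
        have hck' : s m * k' = k' * s m := (hcomm k' (hK₂ker hk') (s m)).symm
        calc k * s m * (k' * s m') = k * (s m * k') * s m' := by group
          _ = k * (k' * s m) * s m' := by rw [hck']
          _ = k * k' * (s m * s m' * (s (m * m'))⁻¹) * s (m * m') := by group
      inv_mem' := by
        rintro _ ⟨k, hk, m, rfl⟩
        have ha : s m⁻¹ * s m * (s (m⁻¹ * m))⁻¹ ∈ K₂ := hwK₂ m⁻¹ m
        have h1 : s (m⁻¹ * m) = s 1 := by rw [inv_mul_cancel]
        rw [h1] at ha
        refine ⟨k⁻¹ * (s m⁻¹ * s m * (s 1)⁻¹)⁻¹ * (s 1)⁻¹,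
          K₂.mul_mem (K₂.mul_mem (K₂.inv_mem hk) (K₂.inv_mem ha)) (K₂.inv_mem hs1),
          m⁻¹, ?_⟩
        have hkc0 : Commute k (s m) := hcomm k (hK₂ker hk) (s m)
        have hkc : Commute k⁻¹ (s m)⁻¹ := hkc0.inv_inv
        have huc : ∀ g : G, s 1 * g = g * s 1 := fun g => hcomm _ (hK₂ker hs1) g
        calc (k * s m)⁻¹ = k⁻¹ * (s m)⁻¹ := by rw [mul_inv_rev, ← hkc.eq]
          _ = k⁻¹ * ((s 1 * ((s m)⁻¹ * (s m⁻¹)⁻¹)) * (s 1)⁻¹ * s m⁻¹) := by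
              rw [huc ((s m)⁻¹ * (s m⁻¹)⁻¹)]
              group
          _ = k⁻¹ * (s m⁻¹ * s m * (s 1)⁻¹)⁻¹ * (s 1)⁻¹ * s m⁻¹ := by
              group
      }
  have hK₂S : K₂ ≤ S := fun k hk => ⟨k * (s 1)⁻¹, K₂.mul_mem hk (K₂.inv_mem hs1), 1,
    by group⟩
  -- decomposition of any g
  have hdecomp : ∀ g : G, ∃ x ∈ S, ∃ f ∈ F, g = x * f := by
    intro g
    have hker : g * (s (c g))⁻¹ ∈ c.ker := by
      simp [MonoidHom.mem_ker, hs]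
    rw [← hKFsup] at hker
    have hFnormal : F.Normal := ⟨fun n hn g => by
      rw [← hcomm n (hFker hn) g, mul_assoc, mul_inv_cancel, mul_one]; exact hn⟩
    have hmem : g * (s (c g))⁻¹ ∈ (K₂ : Set G) * (F : Set G) := by
      rw [← Subgroup.mul_normal]; exact hker
    obtain ⟨k, hk, f, hf, heq⟩ := hmem
    refine ⟨k * s (c g), ⟨k, hk, c g, rfl⟩, f, hf, ?_⟩
    have heq' : k * f = g * (s (c g))⁻¹ := heq
    have hg : g = k * f * s (c g) := by rw [heq']; group
    calc g = k * f * s (c g) := hg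
      _ = k * s (c g) * f := by
          rw [mul_assoc k f, hcomm f (hFker hf) (s (c g)), ← mul_assoc]
  -- S ∩ ker c ≤ K₂
  have hSker : S ⊓ c.ker ≤ K₂ := by
    rintro g ⟨⟨k, hk, m, rfl⟩, hker⟩
    have hm : m = 1 := by
      have := MonoidHom.mem_ker.mp hker
      have hck : c k = 1 := MonoidHom.mem_ker.mp (hK₂ker hk)
      simpa [hck, hs] using this
    subst hm
    exact K₂.mul_mem hk hs1
  have hSF : S ⊓ F = ⊥ := by
    rw [eq_bot_iff, ← hKFinf]
    exact fun g hg => ⟨hSker ⟨hg.1, hFker hg.2⟩, hg.2⟩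
  -- S is normal
  have hSnormal : S.Normal := by
    constructor
    intro n hn g
    obtain ⟨x, hx, f, hf, rfl⟩ := hdecomp g
    have hfc : ∀ g : G, f * g = g * f := fun g => hcomm f (hFker hf) g
    have h1 : x * f * n * (x * f)⁻¹ = x * n * x⁻¹ := by
      rw [mul_inv_rev]
      calc x * f * n * (f⁻¹ * x⁻¹) = x * (f * n * f⁻¹) * x⁻¹ := by group
        _ = x * n * x⁻¹ := by rw [hfc n]; group
    rw [h1]
    exact S.mul_mem (S.mul_mem hx hn) (S.inv_mem hx)
  -- the projection onto F and the conclusion F = ⊥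
  have hFbot : F = ⊥ := by
    set φF : F →* G ⧸ S := (QuotientGroup.mk' S).comp F.subtype with hφF
    have hinj : Function.Injective φF := by
      rw [← MonoidHom.ker_eq_bot_iff, eq_bot_iff]
      rintro ⟨f, hf⟩ hker
      have : f ∈ S := (QuotientGroup.eq_one_iff f).mp hker
      have : f ∈ S ⊓ F := ⟨this, hf⟩
      rw [hSF] at this
      simpa [Subgroup.mem_bot] using this
    have hsurj' : Function.Surjective φF := by
      intro q
      obtain ⟨g, rfl⟩ := QuotientGroup.mk'_surjective S q
      obtain ⟨x, hx, f, hf, rfl⟩ := hdecomp g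
      refine ⟨⟨f, hf⟩, ?_⟩
      show QuotientGroup.mk' S f = QuotientGroup.mk' S (x * f)
      rw [map_mul]
      have : QuotientGroup.mk' S x = 1 := (QuotientGroup.eq_one_iff x).mpr hx
      rw [this, one_mul]
    set e : F ≃* G ⧸ S := MulEquiv.ofBijective φF ⟨hinj, hsurj'⟩ with he
    set ψ : G →* G := F.subtype.comp (e.symm.toMonoidHom.comp (QuotientGroup.mk' S))
      with hψ
    have hψker : ∀ g : G, ψ g ∈ c.ker := fun g => hFker (e.symm ((QuotientGroup.mk' S) g)).2
    have hψ1 : ψ = 1 := hhom ψ hψker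
    rw [eq_bot_iff]
    intro f hf
    have h2 : ψ f = f := by
      show F.subtype (e.symm ((QuotientGroup.mk' S) f)) = f
      have : (QuotientGroup.mk' S) f = φF ⟨f, hf⟩ := rfl
      rw [this]
      have : e.symm (φF ⟨f, hf⟩) = ⟨f, hf⟩ := by
        apply hinj
        exact MulEquiv.ofBijective_apply_symm_apply φF ⟨hinj, hsurj'⟩
      rw [this]
      rfl
    have : f = 1 := by rw [← h2, hψ1]; rfl
    simp [Subgroup.mem_bot, this]
  -- now ker c = K₂
  have hkerK₂ : c.ker = K₂ := by
    rw [← hKFsup, hFbot, sup_bot_eq]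
  -- cardinality
  have hβinf : Cardinal.aleph0 ≤ β := hMinf.trans hβ
  have hG : Cardinal.mk G = Cardinal.mk (G ⧸ c.ker) * Cardinal.mk c.ker := by
    have : Cardinal.mk ((G ⧸ c.ker) × c.ker) = Cardinal.mk (G ⧸ c.ker) * Cardinal.mk c.ker := by
      simpa using Cardinal.mk_prod (α := G ⧸ c.ker) (β := c.ker)
    rw [← this]
    exact Cardinal.mk_congr (Subgroup.groupEquivQuotientProdSubgroup)
  have hquot : Cardinal.mk (G ⧸ c.ker) = Cardinal.mk M :=
    Cardinal.mk_congr (QuotientGroup.quotientKerEquivOfSurjective c hsurj).toEquiv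
  rw [hG, hquot, hkerK₂]
  calc Cardinal.mk M * Cardinal.mk K₂ ≤ β * β := mul_le_mul' hβ hK₂card
    _ = β := Cardinal.mul_eq_self hβinf
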